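/- arXiv:2306.17802 — 2 statements merged into one kernel-verified Lean document; each statement's English description precedes it below -/
import Mathlib

section
/- Let $S \in \mathrm{GL}(m,\mathbb{C})$ be a semisimple (diagonalizable) matrix. Then $S$ lies in $Z(C(S))$, and there is a continuous path $\gamma : [0,1] \to \mathrm{GL}(m,\mathbb{C})$ with $\gamma(0) = I$, $\gamma(1) = S$, and $\gamma(t) \in Z(C(S))$ for all $t$; that is, every semisimple element of $\mathrm{GL}(m,\mathbb{C})$ is contained in the identity path-component of the center of its centralizer (it has `well-behaved monodromy' in the sense of the paper). -/
open Matrix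

/-- A matrix is semisimple if it is diagonalizable over `ℂ`. -/
def IsSemisimpleMatrix {m : ℕ} (S : Matrix (Fin m) (Fin m) ℂ) : Prop :=
  ∃ (P : (Matrix (Fin m) (Fin m) ℂ)ˣ) (d : Fin m → ℂ),
    S = (P : Matrix (Fin m) (Fin m) ℂ) * Matrix.diagonal d * (↑P⁻¹ : Matrix (Fin m) (Fin m) ℂ)

/-- The centre of the centralizer of `S` in `GL(m, ℂ)`, viewed as a set of matrices. -/
def centreCentralizer {m : ℕ} (S : Matrix (Fin m) (Fin m) ℂ) :
    Set (Matrix (Fin m) (Fin m) ℂ) :=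
  {g | IsUnit g ∧ g * S = S * g ∧
    ∀ h : Matrix (Fin m) (Fin m) ℂ, IsUnit h → h * S = S * h → g * h = h * g}

/-- If `k` commutes with `diagonal d` and `e` factors through `d`, then `k`
commutes with `diagonal e`. -/
lemma diag_comm_lift {m : ℕ} {d e : Fin m → ℂ} (hde : ∀ i j, d i = d j → e i = e j)
    {k : Matrix (Fin m) (Fin m) ℂ} (hk : k * Matrix.diagonal d = Matrix.diagonal d * k) :
    k * Matrix.diagonal e = Matrix.diagonal e * k := by
  ext i j
  have h1 := congrFun (congrFun hk i) j
  simp only [Matrix.mul_diagonal, Matrix.diagonal_mul] at h1 ⊢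
  rcases eq_or_ne (k i j) 0 with h0 | h0
  · simp [h0]
  · have hdj : d j = d i := by
      rw [mul_comm (d i) (k i j)] at h1
      exact mul_left_cancel₀ h0 h1
    rw [hde j i hdj, mul_comm]

lemma conj_comm_lift {m : ℕ} (Q R : Matrix (Fin m) (Fin m) ℂ)
    (hQR : Q * R = 1) (hRQ : R * Q = 1) {d e : Fin m → ℂ}
    (hde : ∀ i j, d i = d j → e i = e j) {h : Matrix (Fin m) (Fin m) ℂ}
    (hcomm : h * (Q * Matrix.diagonal d * R) = (Q * Matrix.diagonal d * R) * h) :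
    h * (Q * Matrix.diagonal e * R) = (Q * Matrix.diagonal e * R) * h := by
  have hRQ' : ∀ x : Matrix (Fin m) (Fin m) ℂ, R * (Q * x) = x := fun x => by
    rw [← Matrix.mul_assoc, hRQ, Matrix.one_mul]
  have hQR' : ∀ x : Matrix (Fin m) (Fin m) ℂ, Q * (R * x) = x := fun x => by
    rw [← Matrix.mul_assoc, hQR, Matrix.one_mul]
  set k : Matrix (Fin m) (Fin m) ℂ := R * h * Q with hkdef
  have hk : k * Matrix.diagonal d = Matrix.diagonal d * k := by
    calc (R * h * Q) * Matrix.diagonal d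
        = R * (h * (Q * Matrix.diagonal d * R)) * Q := by
          simp only [Matrix.mul_assoc, hRQ', hQR', hRQ, hQR, Matrix.mul_one]
      _ = R * ((Q * Matrix.diagonal d * R) * h) * Q := by rw [hcomm]
      _ = Matrix.diagonal d * (R * h * Q) := by
          simp only [Matrix.mul_assoc, hRQ', hQR', hRQ, hQR, Matrix.mul_one]
  have hke := diag_comm_lift hde hk
  have hh : h = Q * k * R := by
    simp only [hkdef, Matrix.mul_assoc, hRQ', hQR', hRQ, hQR, Matrix.mul_one]
  calc h * (Q * Matrix.diagonal e * R)
      = Q * (k * Matrix.diagonal e) * R := by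
        rw [hh]; simp only [Matrix.mul_assoc, hRQ', hQR', hRQ, hQR, Matrix.mul_one]
    _ = Q * (Matrix.diagonal e * k) * R := by rw [hke]
    _ = (Q * Matrix.diagonal e * R) * h := by
        rw [hh]; simp only [Matrix.mul_assoc, hRQ', hQR', hRQ, hQR, Matrix.mul_one]

/-- a semisimple `S ∈ GL(m, ℂ)` lies in `Z(C(S))` and is joined to the
identity matrix by a continuous path staying inside `Z(C(S))`; i.e. `S` has
`well-behaved monodromy'. -/
theorem semisimple_wellBehaved_monodromy {m : ℕ} (S : Matrix (Fin m) (Fin m) ℂ)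
    (hS : IsUnit S) (hss : IsSemisimpleMatrix S) :
    S ∈ centreCentralizer S ∧
    ∃ γ : unitInterval → Matrix (Fin m) (Fin m) ℂ,
      Continuous γ ∧ γ 0 = 1 ∧ γ 1 = S ∧ ∀ t, γ t ∈ centreCentralizer S := by
  obtain ⟨P, d, hSPD⟩ := hss
  set Q : Matrix (Fin m) (Fin m) ℂ := (P : Matrix (Fin m) (Fin m) ℂ) with hQ
  set R : Matrix (Fin m) (Fin m) ℂ := (↑P⁻¹ : Matrix (Fin m) (Fin m) ℂ) with hR
  have hQR : Q * R = 1 := P.mul_inv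
  have hRQ : R * Q = 1 := P.inv_mul
  -- the eigenvalues are nonzero
  have hd : ∀ i, d i ≠ 0 := by
    intro i hdi
    have hdet : S.det ≠ 0 := ((Matrix.isUnit_iff_isUnit_det S).mp hS).ne_zero
    apply hdet
    rw [hSPD]
    rw [Matrix.det_mul, Matrix.det_mul, Matrix.det_diagonal]
    rw [Finset.prod_eq_zero (Finset.mem_univ i) hdi]
    ring
  refine ⟨⟨hS, rfl, fun h _ hh => hh.symm⟩, ?_⟩
  -- the path
  set e : unitInterval → Fin m → ℂ :=
    fun t i => Complex.exp ((t : ℝ) * Complex.log (d i)) with he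
  refine ⟨fun t => Q * Matrix.diagonal (e t) * R, ?_, ?_, ?_, ?_⟩
  · refine Continuous.matrix_mul (Continuous.matrix_mul continuous_const ?_) continuous_const
    apply Continuous.matrix_diagonal
    apply continuous_pi
    intro i
    exact Complex.continuous_exp.comp
      ((Complex.continuous_ofReal.comp continuous_subtype_val).mul continuous_const)
  · simp [he, hQR]
  · have h1 : e 1 = d := by
      funext i
      simp [he, Complex.exp_log (hd i)]
    show Q * Matrix.diagonal (e 1) * R = S
    rw [h1, hSPD]
  · intro t
    have het : ∀ i, e t i ≠ 0 := fun i => Complex.exp_ne_zero _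
    refine ⟨?_, ?_, ?_⟩
    · have hdiag : IsUnit (Matrix.diagonal (e t)) := by
        rw [Matrix.isUnit_iff_isUnit_det, Matrix.det_diagonal]
        exact isUnit_iff_ne_zero.mpr (Finset.prod_ne_zero_iff.mpr fun i _ => het i)
      exact (P.isUnit.mul hdiag).mul P⁻¹.isUnit
    · rw [hSPD]
      show Q * Matrix.diagonal (e t) * R * (Q * Matrix.diagonal d * R)
        = Q * Matrix.diagonal d * R * (Q * Matrix.diagonal (e t) * R)
      simp only [Matrix.mul_assoc]
      rw [← Matrix.mul_assoc R Q _, hRQ, Matrix.one_mul,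
        ← Matrix.mul_assoc R Q _, hRQ, Matrix.one_mul]
      rw [← Matrix.mul_assoc (Matrix.diagonal (e t)) (Matrix.diagonal d) _,
        ← Matrix.mul_assoc (Matrix.diagonal d) (Matrix.diagonal (e t)) _,
        Matrix.diagonal_mul_diagonal, Matrix.diagonal_mul_diagonal]
      rw [show (fun i => e t i * d i) = fun i => d i * e t i from
        funext fun i => mul_comm _ _]
    · intro h _ hcomm
      rw [hSPD] at hcomm
      exact (conj_comm_lift Q R hQR hRQ (fun i j hij => by simp [he, hij]) hcomm).symm
end

section
/- Let $V$ be a finite-dimensional vector space over a field $K$, and let $F, G : \mathbb{Z} \to \{\text{subspaces of } V\}$ be two decreasing (antitone) filtrations, i.e. $F(i+1) \subseteq F(i)$ and $G(j+1) \subseteq G(j)$ for all $i, j \in \mathbb{Z}$. Then $F$ and $G$ can be simultaneously split: there exists a basis $b$ of $V$ such that for every $i \in \mathbb{Z}$, $F(i)$ is the span of the set of basis vectors contained in $F(i)$, and for every $j \in \mathbb{Z}$, $G(j)$ is the span of the set of basis vectors contained in $G(j)$. -/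
open Submodule

lemma exists_compl_between {K V : Type*} [Field K] [AddCommGroup V] [Module K V]
    (A B : Submodule K V) (h : A ≤ B) : ∃ W, W ≤ B ∧ A ⊓ W = ⊥ ∧ A ⊔ W = B := by
  obtain ⟨q, hq⟩ := Submodule.exists_isCompl (A.comap B.subtype)
  have hA : (A.comap B.subtype).map B.subtype = A := by
    rw [Submodule.map_comap_subtype, inf_eq_right.mpr h]
  refine ⟨q.map B.subtype, Submodule.map_subtype_le _ _, ?_, ?_⟩
  · rw [← hA, ← Submodule.map_inf _ (Submodule.injective_subtype B), hq.inf_eq_bot,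
      Submodule.map_bot]
  · rw [← hA, ← Submodule.map_sup, hq.sup_eq_top, Submodule.map_top, Submodule.range_subtype]

lemma supIndep_of_lex {α : Type*} [CompleteLattice α] [IsModularLattice α]
    {ι : Type*} [LinearOrder ι] (f : ι → α)
    (h : ∀ k, Disjoint (f k) (⨆ l, ⨆ (_ : k < l), f l)) (s : Finset ι) : s.SupIndep f := by
  classical
  induction s using Finset.induction_on_min with
  | empty => exact Finset.supIndep_empty f
  | insert a s ha IH =>
    have hanotin : a ∉ s := fun hmem => lt_irrefl a (ha a hmem)
    rw [Finset.supIndep_iff_disjoint_erase] at IH ⊢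
    intro i hi
    rcases Finset.mem_insert.mp hi with rfl | hi
    · rw [Finset.erase_insert hanotin]
      refine (h i).mono_right (Finset.sup_le fun x hx => ?_)
      exact le_iSup_of_le x (le_iSup_of_le (ha x hx) le_rfl)
    · have hia : i ≠ a := fun hEq => (by exact lt_irrefl a (hEq ▸ ha i hi))
      rw [Finset.erase_insert_of_ne hia.symm, Finset.sup_insert]
      have d1 : Disjoint (f i) ((s.erase i).sup f) := IH i hi
      have d2 : Disjoint (f i ⊔ (s.erase i).sup f) (f a) := by
        refine ((h a).mono_right ?_).symm
        refine sup_le ?_ (Finset.sup_le fun x hx => ?_)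
        · exact le_iSup_of_le i (le_iSup_of_le (ha i hi) le_rfl)
        · exact le_iSup_of_le x (le_iSup_of_le (ha x (Finset.mem_of_mem_erase hx)) le_rfl)
      have := d1.disjoint_sup_right_of_disjoint_sup_left d2
      rwa [sup_comm] at this

theorem main_split {K : Type*} [Field K] {V : Type*} [AddCommGroup V] [Module K V]
    [FiniteDimensional K V] (F G : ℤ → Submodule K V) (hF : Antitone F) (hG : Antitone G)
    (lo hi : ℤ) (hFt : ∀ i ≤ lo, F i = ⊤) (hFb : ∀ i, hi ≤ i → F i = ⊥)
    (hGt : ∀ j ≤ lo, G j = ⊤) (hGb : ∀ j, hi ≤ j → G j = ⊥) :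
    ∃ (ι : Type) (b : Module.Basis ι K V),
      (∀ i : ℤ, F i = Submodule.span K {v | v ∈ Set.range b ∧ v ∈ F i}) ∧
      (∀ j : ℤ, G j = Submodule.span K {v | v ∈ Set.range b ∧ v ∈ G j}) := by
  classical
  -- choose complements W i j of (F(i+1)⊓G j ⊔ F i⊓G(j+1)) inside F i ⊓ G j
  have hex : ∀ i j : ℤ, ∃ Wij, Wij ≤ F i ⊓ G j ∧ (F (i+1) ⊓ G j ⊔ F i ⊓ G (j+1)) ⊓ Wij = ⊥ ∧
      (F (i+1) ⊓ G j ⊔ F i ⊓ G (j+1)) ⊔ Wij = F i ⊓ G j := fun i j =>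
    exists_compl_between _ _ (sup_le (inf_le_inf (hF (by omega)) le_rfl)
      (inf_le_inf le_rfl (hG (by omega))))
  choose W hWle hWinf hWsup using hex
  have hWbotF : ∀ i j, F i = F (i+1) → W i j = ⊥ := by
    intro i j hEq
    have h1 : (F (i+1) ⊓ G j ⊔ F i ⊓ G (j+1)) = F i ⊓ G j := by
      rw [← hEq]
      exact sup_eq_left.mpr (inf_le_inf le_rfl (hG (by omega)))
    have h2 := hWinf i j
    rwa [h1, inf_eq_right.mpr (hWle i j)] at h2
  have hWbotG : ∀ i j, G j = G (j+1) → W i j = ⊥ := by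
    intro i j hEq
    have h1 : (F (i+1) ⊓ G j ⊔ F i ⊓ G (j+1)) = F i ⊓ G j := by
      rw [← hEq]
      exact sup_eq_right.mpr (inf_le_inf (hF (by omega)) le_rfl)
    have h2 := hWinf i j
    rwa [h1, inf_eq_right.mpr (hWle i j)] at h2
  have hWbot : ∀ i j : ℤ, (i < lo ∨ hi ≤ i ∨ j < lo ∨ hi ≤ j) → W i j = ⊥ := by
    intro i j hcase
    rcases hcase with h | h | h | h
    · exact hWbotF i j (by rw [hFt i (by omega), hFt (i+1) (by omega)])
    · exact hWbotF i j (by rw [hFb i h, hFb (i+1) (by omega)])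
    · exact hWbotG i j (by rw [hGt j (by omega), hGt (j+1) (by omega)])
    · exact hWbotG i j (by rw [hGb j h, hGb (j+1) (by omega)])
  have hQle : ∀ p q i j : ℤ, p ≤ i → q ≤ j →
      W i j ≤ ⨆ i', ⨆ (_ : p ≤ i'), ⨆ j', ⨆ (_ : q ≤ j'), W i' j' := fun p q i j hpi hqj =>
    le_iSup_of_le i (le_iSup_of_le hpi (le_iSup_of_le j (le_iSup_of_le hqj le_rfl)))
  have hbase : ∀ p q : ℤ, (hi ≤ p ∨ hi ≤ q) →
      F p ⊓ G q = ⨆ i, ⨆ (_ : p ≤ i), ⨆ j, ⨆ (_ : q ≤ j), W i j := by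
    intro p q hpq
    apply le_antisymm
    · rcases hpq with h | h
      · rw [hFb p h, bot_inf_eq]; exact bot_le
      · rw [hGb q h, inf_bot_eq]; exact bot_le
    · refine iSup₂_le fun i hi' => iSup₂_le fun j hj => ?_
      rcases hpq with h | h
      · rw [hWbot i j (by omega)]; exact bot_le
      · rw [hWbot i j (by omega)]; exact bot_le
  have key : ∀ (k : ℕ) (p q : ℤ), (hi - p).toNat + (hi - q).toNat ≤ k →
      F p ⊓ G q = ⨆ i, ⨆ (_ : p ≤ i), ⨆ j, ⨆ (_ : q ≤ j), W i j := by
    intro k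
    induction k with
    | zero =>
      intro p q hk
      exact hbase p q (by omega)
    | succ k ih =>
      intro p q hk
      by_cases hp : hi ≤ p
      · exact hbase p q (Or.inl hp)
      by_cases hq : hi ≤ q
      · exact hbase p q (Or.inr hq)
      have ih1 := ih (p+1) q (by omega)
      have ih2 := ih p (q+1) (by omega)
      rw [← hWsup p q, ih1, ih2]
      apply le_antisymm
      · refine sup_le (sup_le ?_ ?_) (hQle p q p q le_rfl le_rfl)
        · exact iSup₂_le fun i hi' => iSup₂_le fun j hj => hQle p q i j (by omega) hj
        · exact iSup₂_le fun i hi' => iSup₂_le fun j hj => hQle p q i j hi' (by omega)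
      · refine iSup₂_le fun i hi' => iSup₂_le fun j hj => ?_
        rcases lt_or_ge p i with h | h
        · exact le_sup_of_le_left (le_sup_of_le_left (hQle (p+1) q i j (by omega) hj))
        · have hip : i = p := le_antisymm h hi'
          rcases lt_or_ge q j with h2 | h2
          · exact le_sup_of_le_left (le_sup_of_le_right (hQle p (q+1) i j (by omega) (by omega)))
          · have hjq : j = q := le_antisymm h2 hj
            rw [hip, hjq]
            exact le_sup_right
  -- finite support
  set s : Finset (ℤ ×ₗ ℤ) :=
    ((Finset.Icc lo (hi-1)) ×ˢ (Finset.Icc lo (hi-1))).map toLex.toEmbedding with hs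
  have hmem : ∀ k : ℤ ×ₗ ℤ, k ∈ s ↔
      (lo ≤ (ofLex k).1 ∧ (ofLex k).1 ≤ hi - 1) ∧ (lo ≤ (ofLex k).2 ∧ (ofLex k).2 ≤ hi - 1) := by
    intro k
    rw [hs, Finset.mem_map_equiv, Finset.mem_product, Finset.mem_Icc, Finset.mem_Icc]
    rfl
  set W' : ℤ ×ₗ ℤ → Submodule K V := fun k => W (ofLex k).1 (ofLex k).2 with hW'
  have hdisj : ∀ k, Disjoint (W' k) (⨆ l, ⨆ (_ : k < l), W' l) := by
    intro k
    have hsub : (⨆ l, ⨆ (_ : k < l), W' l) ≤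
        F ((ofLex k).1 + 1) ⊔ F (ofLex k).1 ⊓ G ((ofLex k).2 + 1) := by
      refine iSup₂_le fun l hl => ?_
      rcases (Prod.Lex.lt_iff (x := k) (y := l)).mp hl with h | ⟨h1, h2⟩
      · exact le_sup_of_le_left (((hWle _ _).trans inf_le_left).trans (hF (by omega)))
      · refine le_sup_of_le_right ((hWle _ _).trans (inf_le_inf ?_ (hG (by omega))))
        rw [h1]
    refine Disjoint.mono_right hsub ?_
    rw [disjoint_iff]
    have hz : F (ofLex k).1 ⊓ G ((ofLex k).2 + 1) ≤ G (ofLex k).2 :=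
      inf_le_right.trans (hG (by omega))
    have hmod : G (ofLex k).2 ⊓ (F ((ofLex k).1 + 1) ⊔ F (ofLex k).1 ⊓ G ((ofLex k).2 + 1)) =
        F ((ofLex k).1 + 1) ⊓ G (ofLex k).2 ⊔ F (ofLex k).1 ⊓ G ((ofLex k).2 + 1) := by
      rw [← inf_sup_assoc_of_le _ hz, inf_comm]
    have hle : W' k ⊓ (F ((ofLex k).1 + 1) ⊔ F (ofLex k).1 ⊓ G ((ofLex k).2 + 1)) ≤
        (F ((ofLex k).1 + 1) ⊓ G (ofLex k).2 ⊔ F (ofLex k).1 ⊓ G ((ofLex k).2 + 1)) ⊓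
          W (ofLex k).1 (ofLex k).2 := by
      rw [← hmod]
      refine le_inf (le_inf (inf_le_left.trans ((hWle _ _).trans inf_le_right)) inf_le_right)
        inf_le_left
    refine le_bot_iff.mp (hle.trans (le_of_eq (hWinf (ofLex k).1 (ofLex k).2)))
  have hsupindep : s.SupIndep W' := supIndep_of_lex W' hdisj s
  have hindep : iSupIndep (fun k : ↥s => W' ↑k) := hsupindep.independent
  have htop : (⨆ k : ↥s, W' ↑k) = ⊤ := by
    apply le_antisymm le_top
    have h1 : (⊤ : Submodule K V) = F lo ⊓ G lo := by rw [hFt lo le_rfl, hGt lo le_rfl, inf_top_eq]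
    rw [h1, key ((hi - lo).toNat + (hi - lo).toNat) lo lo le_rfl]
    refine iSup₂_le fun i hi' => iSup₂_le fun j hj => ?_
    by_cases hk : toLex (i, j) ∈ s
    · exact le_iSup_of_le ⟨toLex (i,j), hk⟩ le_rfl
    · rw [hmem, ofLex_toLex] at hk
      rw [hWbot i j (by omega)]
      exact bot_le
  have internal : DirectSum.IsInternal (fun k : ↥s => W' ↑k) :=
    (DirectSum.isInternal_submodule_iff_iSupIndep_and_iSup_eq_top _).mpr ⟨hindep, htop⟩
  let β : ↥s → Type _ := fun k => Module.Free.ChooseBasisIndex K ↥(W' ↑k)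
  let v : ∀ k : ↥s, Module.Basis (β k) K ↥(W' ↑k) := fun k => Module.Free.chooseBasis K ↥(W' ↑k)
  have hfin : Fintype (Σ k : ↥s, β k) := inferInstance
  let e := @Fintype.equivFin _ hfin
  set b : Module.Basis (Fin (@Fintype.card _ hfin)) K V := (internal.collectedBasis v).reindex e with hb
  have hrange : Set.range ⇑b = Set.range ⇑(internal.collectedBasis v) := by
    rw [hb]; exact Module.Basis.range_reindex _ _
  have hW_le_span : ∀ (U : Submodule K V) (i j : ℤ), W i j ≤ U →
      W i j ≤ Submodule.span K {x | x ∈ Set.range ⇑b ∧ x ∈ U} := by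
    intro U i j hle
    by_cases hk : toLex (i,j) ∈ s
    · have hspan : W' (toLex (i,j)) =
          Submodule.span K (Subtype.val '' Set.range ⇑(v ⟨toLex (i,j), hk⟩)) := by
        have h1 : Submodule.map (W' (toLex (i,j))).subtype
            (Submodule.span K (Set.range ⇑(v ⟨toLex (i,j), hk⟩))) = W' (toLex (i,j)) := by
          rw [Module.Basis.span_eq, Submodule.map_top, Submodule.range_subtype]
        rw [Submodule.map_span] at h1
        exact h1.symm
      have hWW : W i j = W' (toLex (i,j)) := rfl
      rw [hWW, hspan]
      refine Submodule.span_mono ?_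
      rintro x ⟨y, ⟨a, rfl⟩, rfl⟩
      constructor
      · rw [hrange]
        refine ⟨⟨⟨toLex (i,j), hk⟩, a⟩, ?_⟩
        rw [internal.collectedBasis_coe]
      · exact hle ((v ⟨toLex (i,j), hk⟩ a).2 : _ ∈ W i j)
    · rw [hmem, ofLex_toLex] at hk
      rw [hWbot i j (by omega)]
      exact bot_le
  refine ⟨_, b, fun p => ?_, fun q => ?_⟩
  · apply le_antisymm
    · have h1 : F p = F p ⊓ G lo := by rw [hGt lo le_rfl, inf_top_eq]
      conv_lhs => rw [h1, key ((hi - p).toNat + (hi - lo).toNat) p lo le_rfl]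
      refine iSup₂_le fun i hi' => iSup₂_le fun j hj =>
        hW_le_span (F p) i j ((hWle i j).trans (inf_le_left.trans (hF hi')))
    · exact Submodule.span_le.mpr fun x hx => hx.2
  · apply le_antisymm
    · have h1 : G q = F lo ⊓ G q := by rw [hFt lo le_rfl, top_inf_eq]
      conv_lhs => rw [h1, key ((hi - lo).toNat + (hi - q).toNat) lo q le_rfl]
      refine iSup₂_le fun i hi' => iSup₂_le fun j hj =>
        hW_le_span (G q) i j ((hWle i j).trans (inf_le_right.trans (hG hj)))
    · exact Submodule.span_le.mpr fun x hx => hx.2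


lemma antitone_stabilizes_below {K : Type*} [Field K] {V : Type*} [AddCommGroup V] [Module K V]
    [FiniteDimensional K V] (F : ℤ → Submodule K V) (hF : Antitone F) :
    ∃ a : ℤ, ∀ i ≤ a, F i = F a := by
  obtain ⟨n₀, hn₀⟩ := monotone_stabilizes_iff_noetherian.mpr (inferInstance : IsNoetherian K V)
    ⟨fun n : ℕ => F (-(n:ℤ)), fun m n hmn => hF (by omega)⟩
  refine ⟨-(n₀:ℤ), fun i hi => ?_⟩
  have h1 := hn₀ (-i).toNat (by omega)
  change F (-(n₀:ℤ)) = F (-(((-i).toNat : ℕ) : ℤ)) at h1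
  have h2 : -(((-i).toNat : ℕ) : ℤ) = i := by omega
  rw [h2] at h1
  exact h1.symm

lemma antitone_stabilizes_above {K : Type*} [Field K] {V : Type*} [AddCommGroup V] [Module K V]
    [FiniteDimensional K V] (F : ℤ → Submodule K V) (hF : Antitone F) :
    ∃ c : ℤ, ∀ i, c ≤ i → F i = F c := by
  obtain ⟨n₁, hn₁⟩ := IsArtinian.monotone_stabilizes
    (⟨fun n : ℕ => OrderDual.toDual (F (n:ℤ)),
      fun m n hmn => OrderDual.toDual_le_toDual.mpr (hF (by omega))⟩ : ℕ →o (Submodule K V)ᵒᵈ)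
  refine ⟨(n₁:ℤ), fun i hi => ?_⟩
  have h1 := hn₁ i.toNat (by omega)
  change F (n₁:ℤ) = F ((i.toNat : ℕ) : ℤ) at h1
  have h2 : ((i.toNat : ℕ) : ℤ) = i := by omega
  rw [h2] at h1
  exact h1.symm



/-- any two decreasing `ℤ`-filtrations on a finite-dimensional vector
space can be simultaneously split: there is a basis adapted to both filtrations, i.e.
each filtration subspace is the span of the basis vectors it contains. -/
theorem pair_of_filtrations_simultaneously_split (K : Type*) [Field K]
    (V : Type*) [AddCommGroup V] [Module K V] [FiniteDimensional K V]
    (F G : ℤ → Submodule K V) (hF : Antitone F) (hG : Antitone G) :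
    ∃ (ι : Type) (b : Module.Basis ι K V),
      (∀ i : ℤ, F i = Submodule.span K {v | v ∈ Set.range b ∧ v ∈ F i}) ∧
      (∀ j : ℤ, G j = Submodule.span K {v | v ∈ Set.range b ∧ v ∈ G j}) := by
  classical
  obtain ⟨aF, haF⟩ := antitone_stabilizes_below F hF
  obtain ⟨aG, haG⟩ := antitone_stabilizes_below G hG
  obtain ⟨cF, hcF⟩ := antitone_stabilizes_above F hF
  obtain ⟨cG, hcG⟩ := antitone_stabilizes_above G hG
  set lo : ℤ := min aF aG with hlodef
  set hi : ℤ := max (max cF cG) lo with hhidef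
  have hlohi : lo ≤ hi := le_max_right _ _
  have hloF : ∀ i ≤ lo, F i = F lo := fun i h => by
    rw [haF i (by omega), haF lo (by omega)]
  have hloG : ∀ j ≤ lo, G j = G lo := fun j h => by
    rw [haG j (by omega), haG lo (by omega)]
  have hhiF : ∀ i, hi ≤ i → F i = F hi := fun i h => by
    rw [hcF i (by omega), hcF hi (by omega)]
  have hhiG : ∀ j, hi ≤ j → G j = G hi := fun j h => by
    rw [hcG j (by omega), hcG hi (by omega)]
  set F' : ℤ → Submodule K V := fun i => if i < lo then ⊤ else if hi < i then ⊥ else F i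
    with hF'def
  set G' : ℤ → Submodule K V := fun j => if j < lo then ⊤ else if hi < j then ⊥ else G j
    with hG'def
  have hF'anti : Antitone F' := by
    intro x y hxy
    by_cases hx1 : x < lo
    · simp only [hF'def, if_pos hx1]; exact le_top
    · have hy1 : ¬ y < lo := by omega
      simp only [hF'def, if_neg hx1, if_neg hy1]
      by_cases hy2 : hi < y
      · rw [if_pos hy2]; exact bot_le
      · have hx2 : ¬ hi < x := by omega
        rw [if_neg hy2, if_neg hx2]
        exact hF hxy
  have hG'anti : Antitone G' := by
    intro x y hxy
    by_cases hx1 : x < lo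
    · simp only [hG'def, if_pos hx1]; exact le_top
    · have hy1 : ¬ y < lo := by omega
      simp only [hG'def, if_neg hx1, if_neg hy1]
      by_cases hy2 : hi < y
      · rw [if_pos hy2]; exact bot_le
      · have hx2 : ¬ hi < x := by omega
        rw [if_neg hy2, if_neg hx2]
        exact hG hxy
  have hF't : ∀ i ≤ lo - 1, F' i = ⊤ := fun i h => by
    simp only [hF'def]; rw [if_pos (by omega)]
  have hF'b : ∀ i, hi + 1 ≤ i → F' i = ⊥ := fun i h => by
    simp only [hF'def]; rw [if_neg (by omega), if_pos (by omega)]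
  have hG't : ∀ j ≤ lo - 1, G' j = ⊤ := fun j h => by
    simp only [hG'def]; rw [if_pos (by omega)]
  have hG'b : ∀ j, hi + 1 ≤ j → G' j = ⊥ := fun j h => by
    simp only [hG'def]; rw [if_neg (by omega), if_pos (by omega)]
  obtain ⟨ι, b, hbF, hbG⟩ := main_split F' G' hF'anti hG'anti (lo - 1) (hi + 1)
    hF't hF'b hG't hG'b
  have htransF : ∀ i : ℤ, ∃ i', F' i' = F i := by
    intro i
    by_cases h1 : i < lo
    · refine ⟨lo, ?_⟩
      simp only [hF'def]
      rw [if_neg (by omega), if_neg (by omega)]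
      exact (hloF i (by omega)).symm
    by_cases h2 : hi < i
    · refine ⟨hi, ?_⟩
      simp only [hF'def]
      rw [if_neg (by omega), if_neg (by omega)]
      exact (hhiF i (by omega)).symm
    · refine ⟨i, ?_⟩
      simp only [hF'def]
      rw [if_neg h1, if_neg h2]
  have htransG : ∀ j : ℤ, ∃ j', G' j' = G j := by
    intro j
    by_cases h1 : j < lo
    · refine ⟨lo, ?_⟩
      simp only [hG'def]
      rw [if_neg (by omega), if_neg (by omega)]
      exact (hloG j (by omega)).symm
    by_cases h2 : hi < j
    · refine ⟨hi, ?_⟩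
      simp only [hG'def]
      rw [if_neg (by omega), if_neg (by omega)]
      exact (hhiG j (by omega)).symm
    · refine ⟨j, ?_⟩
      simp only [hG'def]
      rw [if_neg h1, if_neg h2]
  refine ⟨ι, b, fun i => ?_, fun j => ?_⟩
  · obtain ⟨i', h⟩ := htransF i
    rw [← h]
    exact hbF i'
  · obtain ⟨j', h⟩ := htransG j
    rw [← h]
    exact hbG j'
end
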